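/- Let M be an n × n real Metzler matrix and let p : [0,∞) → ℝⁿ be a differentiable function satisfying p′(t) ≤ M p(t) entrywise for all t ≥ 0. Then for all t ≥ 0, p(t) ≤ exp(tM) p(0) entrywise, where exp(tM) denotes the matrix exponential of tM. -/

import Mathlib

open NormedSpace Matrix

private lemma pow_entry_nonneg {n : ℕ} {A : Matrix (Fin n) (Fin n) ℝ}
    (hA : ∀ i j, 0 ≤ A i j) (k : ℕ) : ∀ i j, 0 ≤ (A ^ k) i j := by
  induction k with
  | zero =>
    intro i j
    rw [pow_zero, Matrix.one_apply]
    split <;> norm_num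
  | succ k ih =>
    intro i j
    rw [pow_succ, Matrix.mul_apply]
    exact Finset.sum_nonneg fun l _ => mul_nonneg (ih i l) (hA l j)

private lemma exp_entry_nonneg_of_nonneg {n : ℕ} {A : Matrix (Fin n) (Fin n) ℝ}
    (hA : ∀ i j, 0 ≤ A i j) (i j : Fin n) : 0 ≤ NormedSpace.exp A i j := by
  letI : SeminormedRing (Matrix (Fin n) (Fin n) ℝ) := Matrix.linftyOpSemiNormedRing
  letI : NormedRing (Matrix (Fin n) (Fin n) ℝ) := Matrix.linftyOpNormedRing
  letI : NormedAlgebra ℝ (Matrix (Fin n) (Fin n) ℝ) := Matrix.linftyOpNormedAlgebra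
  rw [NormedSpace.exp_eq_tsum ℝ]
  have hs : Summable fun k : ℕ => (k.factorial : ℝ)⁻¹ • A ^ k := NormedSpace.expSeries_summable' A
  have h1 : HasSum (fun k : ℕ => ((k.factorial : ℝ)⁻¹ • A ^ k) i j)
      ((∑' k : ℕ, (k.factorial : ℝ)⁻¹ • A ^ k) i j) := by
    have := hs.hasSum
    exact (Pi.hasSum.mp ((Pi.hasSum.mp this) i)) j
  refine hasSum_le (fun k => ?_) hasSum_zero h1
  rw [Matrix.smul_apply, smul_eq_mul]
  exact mul_nonneg (by positivity) (pow_entry_nonneg hA k i j)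

private lemma exp_entry_nonneg_metzler {n : ℕ} {M : Matrix (Fin n) (Fin n) ℝ}
    (hM : ∀ i j : Fin n, i ≠ j → 0 ≤ M i j) {s : ℝ} (hs : 0 ≤ s) (i j : Fin n) :
    0 ≤ NormedSpace.exp (s • M) i j := by
  set c : ℝ := ∑ k, |M k k| with hc_def
  have hc : ∀ a : Fin n, 0 ≤ M a a + c := by
    intro a
    have h1 : |M a a| ≤ c :=
      Finset.single_le_sum (fun k _ => abs_nonneg (M k k)) (Finset.mem_univ a)
    have := neg_abs_le (M a a)
    linarith
  set N : Matrix (Fin n) (Fin n) ℝ := M + c • (1 : Matrix (Fin n) (Fin n) ℝ) with hN_def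
  have hN : ∀ a b, 0 ≤ N a b := by
    intro a b
    by_cases h : a = b
    · subst h
      simpa [hN_def, Matrix.smul_apply, Matrix.one_apply] using hc a
    · simpa [hN_def, Matrix.smul_apply, Matrix.one_apply, h] using hM a b h
  have key : s • M = s • N + (-(s * c)) • (1 : Matrix (Fin n) (Fin n) ℝ) := by
    rw [hN_def, smul_add, smul_smul, add_assoc, ← add_smul]
    simp
  have hcomm : Commute (s • N) ((-(s * c)) • (1 : Matrix (Fin n) (Fin n) ℝ)) :=
    ((Commute.one_right (s • N)).smul_right _)
  have hdiag : (-(s * c)) • (1 : Matrix (Fin n) (Fin n) ℝ)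
      = Matrix.diagonal (fun _ => -(s * c)) :=
    Matrix.smul_one_eq_diagonal _
  rw [key, Matrix.exp_add_of_commute _ _ hcomm, hdiag, Matrix.exp_diagonal,
    Matrix.mul_diagonal]
  have h1 : 0 ≤ NormedSpace.exp (s • N) i j := by
    refine exp_entry_nonneg_of_nonneg (fun a b => ?_) i j
    exact mul_nonneg hs (hN a b)
  have h2 : (0:ℝ) ≤ NormedSpace.exp (fun _ : Fin n => -(s * c)) j := by
    have : NormedSpace.exp (fun _ : Fin n => -(s * c)) j
        = NormedSpace.exp (-(s * c)) :=
      Pi.coe_exp _ j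
    rw [this, ← Real.exp_eq_exp_ℝ]
    exact (Real.exp_pos _).le
  exact mul_nonneg h1 h2

/-- the entry evaluation continuous linear map -/
private def entryCLM {n : ℕ} (i j : Fin n) : Matrix (Fin n) (Fin n) ℝ →L[ℝ] ℝ :=
  { toLinearMap :=
      { toFun := fun A => A i j
        map_add' := fun _ _ => rfl
        map_smul' := fun _ _ => rfl }
    cont := by
      show Continuous fun A : Matrix (Fin n) (Fin n) ℝ => A i j
      exact (continuous_apply j).comp (continuous_apply i) }

/-- If `M` is an `n × n` real Metzler matrix and `p : [0,∞) → ℝⁿ` is differentiable with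
`p'(t) ≤ M p(t)` entrywise for all `t ≥ 0`, then `p(t) ≤ exp(tM) p(0)` entrywise for all
`t ≥ 0`, where `exp(tM)` is the matrix exponential (`NormedSpace.exp (t • M)`). -/
theorem comparison_principle_metzler {n : ℕ} (M : Matrix (Fin n) (Fin n) ℝ)
    (hMetzler : ∀ i j : Fin n, i ≠ j → 0 ≤ M i j)
    (p p' : ℝ → Fin n → ℝ)
    (hderiv : ∀ t : ℝ, 0 ≤ t → ∀ i : Fin n,
      HasDerivWithinAt (fun s => p s i) (p' t i) (Set.Ici 0) t)
    (hineq : ∀ t : ℝ, 0 ≤ t → ∀ i : Fin n, p' t i ≤ M.mulVec (p t) i) :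
    ∀ t : ℝ, 0 ≤ t → ∀ i : Fin n,
      p t i ≤ (NormedSpace.exp (t • M)).mulVec (p 0) i := by
  intro T hT i
  letI : SeminormedRing (Matrix (Fin n) (Fin n) ℝ) := Matrix.linftyOpSemiNormedRing
  letI : NormedRing (Matrix (Fin n) (Fin n) ℝ) := Matrix.linftyOpNormedRing
  letI : NormedAlgebra ℝ (Matrix (Fin n) (Fin n) ℝ) := Matrix.linftyOpNormedAlgebra
  set E : ℝ → Matrix (Fin n) (Fin n) ℝ := fun t => NormedSpace.exp ((T - t) • M) with hE_def
  -- derivative of E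
  have hE : ∀ t : ℝ, HasDerivAt E ((-1 : ℝ) • (E t * M)) t := by
    intro t
    have h1 : HasDerivAt (fun u : ℝ => NormedSpace.exp (u • M))
        (NormedSpace.exp ((T - t) • M) * M) (T - t) :=
      hasDerivAt_exp_smul_const M (T - t)
    have hg : HasDerivAt (fun s : ℝ => T - s) (-1 : ℝ) t := by
      simpa using (hasDerivAt_id t).const_sub T
    exact h1.scomp t hg
  -- entrywise derivative of E
  have hEentry : ∀ t : ℝ, ∀ a b : Fin n,
      HasDerivAt (fun s => E s a b) (((-1 : ℝ) • (E t * M)) a b) t := by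
    intro t a b
    exact ((entryCLM a b).hasFDerivAt.comp_hasDerivAt t (hE t))
  -- the comparison function
  set v : ℝ → ℝ := fun t => ∑ j, E t i j * p t j with hv_def
  set d : ℝ → ℝ := fun t => ∑ j, (((-1 : ℝ) • (E t * M)) i j * p t j + E t i j * p' t j)
    with hd_def
  have hv : ∀ t : ℝ, 0 ≤ t → HasDerivWithinAt v (d t) (Set.Ici 0) t := by
    intro t ht
    exact HasDerivWithinAt.fun_sum fun j _ =>
      ((hEentry t i j).hasDerivWithinAt.mul (hderiv t ht j))
  -- d t ≤ 0 on [0, T]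
  have hd_nonpos : ∀ t : ℝ, t ∈ Set.Icc 0 T → d t ≤ 0 := by
    intro t ht
    have hEnn : ∀ a b, 0 ≤ E t a b := fun a b =>
      exp_entry_nonneg_metzler hMetzler (by linarith [ht.2] : (0:ℝ) ≤ T - t) a b
    have h2 : ∑ j, (∑ k, E t i k * M k j) * p t j
        = ∑ k, E t i k * Matrix.mulVec M (p t) k := by
      simp only [Finset.sum_mul, Matrix.mulVec, dotProduct, Finset.mul_sum]
      rw [Finset.sum_comm]
      exact Finset.sum_congr rfl fun k _ => Finset.sum_congr rfl fun j _ => by ring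
    have hrw : d t = ∑ k, E t i k * (p' t k - M.mulVec (p t) k) := by
      rw [hd_def]
      have h1 : ∀ j, (((-1:ℝ) • (E t * M)) i j * p t j + E t i j * p' t j)
          = E t i j * p' t j - (∑ k, E t i k * M k j) * p t j := by
        intro j
        simp only [Matrix.smul_apply, Matrix.mul_apply, smul_eq_mul, neg_one_mul]
        ring
      simp only [h1, Finset.sum_sub_distrib, h2, mul_sub]
    rw [hrw]
    apply Finset.sum_nonpos
    intro k _
    have h1 : p' t k - M.mulVec (p t) k ≤ 0 := sub_nonpos.mpr (hineq t ht.1 k)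
    exact mul_nonpos_of_nonneg_of_nonpos (hEnn i k) h1
  -- v is antitone on [0, T]
  have hanti : AntitoneOn v (Set.Icc 0 T) := by
    apply antitoneOn_of_deriv_nonpos (convex_Icc 0 T)
    · intro t ht
      exact ((hv t ht.1).continuousWithinAt).mono (Set.Icc_subset_Ici_self)
    · intro t ht
      rw [interior_Icc] at ht
      exact ((hv t ht.1.le).hasDerivAt (Ici_mem_nhds ht.1)).differentiableAt.differentiableWithinAt
    · intro t ht
      rw [interior_Icc] at ht
      rw [((hv t ht.1.le).hasDerivAt (Ici_mem_nhds ht.1)).deriv]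
      exact hd_nonpos t ⟨ht.1.le, ht.2.le⟩
  have hvT : v T = p T i := by
    simp [hv_def, hE_def, Matrix.one_apply]
  have hv0 : v 0 = (NormedSpace.exp (T • M)).mulVec (p 0) i := by
    simp [hv_def, hE_def, Matrix.mulVec, dotProduct]
  have := hanti (Set.left_mem_Icc.mpr hT) (Set.right_mem_Icc.mpr hT) hT
  rw [hvT, hv0] at this
  exact this
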